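/- Let F be an algebraically closed field of characteristic different from 2, λ ∈ F, and n = 2k even. Let X be the n×n symmetric tridiagonal matrix with zero diagonal and off-diagonal entries alternating (1,0,1,0,…), and let Y be the symmetric tridiagonal matrix with diagonal (1, 0, …, 0), superdiagonal and subdiagonal entries alternating (λ, 1, λ, 1, …). Then the pair (X, Y) is equivalent to (I_n, J_n(λ)). -/

import Mathlib

open Matrix

/-- Equivalence of pairs of square matrices. -/
def PairEquiv {F : Type*} [Field F] {n : ℕ} (A B A' B' : Matrix (Fin n) (Fin n) F) : Prop :=
  ∃ R S : Matrix (Fin n) (Fin n) F, IsUnit R ∧ IsUnit S ∧ R * A * S = A' ∧ R * B * S = B'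

/-- The `n×n` Jordan block `J_n(λ)`. -/
def Jmat (F : Type*) [Field F] (n : ℕ) (lam : F) : Matrix (Fin n) (Fin n) F :=
  Matrix.of fun i j => if i = j then lam else if (j : ℕ) = (i : ℕ) + 1 then 1 else 0

def sigF (k : ℕ) (hk : 0 < k) (t : Fin (2 * k)) : Fin (2 * k) :=
  ⟨if (t : ℕ) < k then 2 * k - 1 - 2 * (t : ℕ) else 2 * ((t : ℕ) - k), by
    have := t.isLt; split_ifs <;> omega⟩

def tauF (k : ℕ) (hk : 0 < k) (t : Fin (2 * k)) : Fin (2 * k) :=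
  ⟨if (t : ℕ) < k then 2 * (k - 1 - (t : ℕ)) else 2 * ((t : ℕ) - k) + 1, by
    have := t.isLt; split_ifs <;> omega⟩

lemma sigF_val (k : ℕ) (hk : 0 < k) (t : Fin (2 * k)) :
    ((sigF k hk t : Fin (2 * k)) : ℕ)
      = if (t : ℕ) < k then 2 * k - 1 - 2 * (t : ℕ) else 2 * ((t : ℕ) - k) := rfl

lemma tauF_val (k : ℕ) (hk : 0 < k) (t : Fin (2 * k)) :
    ((tauF k hk t : Fin (2 * k)) : ℕ)
      = if (t : ℕ) < k then 2 * (k - 1 - (t : ℕ)) else 2 * ((t : ℕ) - k) + 1 := rfl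

theorem stmt_14 (F : Type*) [Field F] [IsAlgClosed F] (hchar : ringChar F ≠ 2)
    (k : ℕ) (hk : 0 < k) (lam : F) :
    PairEquiv
      (Matrix.of fun i j : Fin (2 * k) =>
        if (j : ℕ) = (i : ℕ) + 1 then (if (i : ℕ) % 2 = 0 then (1 : F) else 0)
        else if (i : ℕ) = (j : ℕ) + 1 then (if (j : ℕ) % 2 = 0 then 1 else 0)
        else 0)
      (Matrix.of fun i j : Fin (2 * k) =>
        if i = j then (if (i : ℕ) = 0 then (1 : F) else 0)
        else if (j : ℕ) = (i : ℕ) + 1 then (if (i : ℕ) % 2 = 0 then lam else 1)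
        else if (i : ℕ) = (j : ℕ) + 1 then (if (j : ℕ) % 2 = 0 then lam else 1)
        else 0)
      (1 : Matrix (Fin (2 * k)) (Fin (2 * k)) F)
      (Jmat F (2 * k) lam) := by
  set X : Matrix (Fin (2 * k)) (Fin (2 * k)) F :=
    Matrix.of fun i j : Fin (2 * k) =>
        if (j : ℕ) = (i : ℕ) + 1 then (if (i : ℕ) % 2 = 0 then (1 : F) else 0)
        else if (i : ℕ) = (j : ℕ) + 1 then (if (j : ℕ) % 2 = 0 then 1 else 0)
        else 0 with hX
  set Y : Matrix (Fin (2 * k)) (Fin (2 * k)) F :=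
    Matrix.of fun i j : Fin (2 * k) =>
        if i = j then (if (i : ℕ) = 0 then (1 : F) else 0)
        else if (j : ℕ) = (i : ℕ) + 1 then (if (i : ℕ) % 2 = 0 then lam else 1)
        else if (i : ℕ) = (j : ℕ) + 1 then (if (j : ℕ) % 2 = 0 then lam else 1)
        else 0 with hY
  set R : Matrix (Fin (2 * k)) (Fin (2 * k)) F :=
    Matrix.of fun i j => if j = tauF k hk i then (1 : F) else 0 with hR
  set S : Matrix (Fin (2 * k)) (Fin (2 * k)) F :=
    Matrix.of fun i j => if i = sigF k hk j then (1 : F) else 0 with hS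
  have hleft : ∀ (M : Matrix (Fin (2 * k)) (Fin (2 * k)) F) (i j : Fin (2 * k)),
      (R * M) i j = M (tauF k hk i) j := by
    intro M i j
    simp [hR, Matrix.mul_apply, ite_mul, Finset.sum_ite_eq]
  have hright : ∀ (M : Matrix (Fin (2 * k)) (Fin (2 * k)) F) (i j : Fin (2 * k)),
      (M * S) i j = M i (sigF k hk j) := by
    intro M i j
    simp [hS, Matrix.mul_apply, mul_ite, Finset.sum_ite_eq']
  have hRXS : R * X * S = 1 := by
    ext i j
    rw [hright, hleft]
    have hi := i.isLt
    have hj := j.isLt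
    simp only [hX, Matrix.of_apply, Matrix.one_apply, sigF_val, tauF_val, Fin.ext_iff]
    split_ifs <;> first | rfl | (exfalso; first | assumption | omega)
  have hRYS : R * Y * S = Jmat F (2 * k) lam := by
    ext i j
    rw [hright, hleft]
    have hi := i.isLt
    have hj := j.isLt
    simp only [hY, Jmat, Matrix.of_apply, sigF_val, tauF_val, Fin.ext_iff]
    split_ifs <;> first | rfl | (exfalso; first | assumption | omega)
  have hR' : Invertible R :=
    invertibleOfRightInverse (a := R) (b := X * S) (by rw [← Matrix.mul_assoc]; exact hRXS)
  have hS' : Invertible S :=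
    invertibleOfLeftInverse (a := S) (b := R * X) hRXS
  exact ⟨R, S, isUnit_of_invertible R, isUnit_of_invertible S, hRXS, hRYS⟩
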